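/- Fix a dimension p ≥ 1, β > 0, σ² ≥ 0, and points s, s* ∈ ℝ^p with ‖s−s*‖² = Δ². Let u ~ N(0, σ² I_p) be a p-dimensional Gaussian random vector, and conditional on u let (y, x*) be a centered bivariate Gaussian vector with Var(y) = Var(x*) = 1 and Cov(y, x*) = exp(−β‖s+u−s*‖²). Set γ = E[exp(−β‖s+u−s*‖²)]. Then E[(γ·y − x*)²] = 1 − (1+2βσ²)^{−p} exp(−2βΔ²/(1+2βσ²)). -/

import Mathlib

open MeasureTheory ProbabilityTheory Matrix Real Filter Asymptotics

/-- The law of a vector of i.i.d. standard normal random variables indexed by `ι`. -/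
noncomputable def stdGaussian (ι : Type*) [Fintype ι] : Measure (ι → ℝ) :=
  Measure.pi fun _ => gaussianReal 0 1


lemma tendsto_mul_exp_neg_mul_sq {b : ℝ} (hb : 0 < b) :
    Tendsto (fun x : ℝ => x * Real.exp (-b * x ^ 2)) atTop (nhds 0) := by
  have h := rpow_mul_exp_neg_mul_sq_isLittleO_exp_neg hb 1
  have h2 : Tendsto (fun x : ℝ => Real.exp (-(1/2) * x)) atTop (nhds 0) := by
    refine Real.tendsto_exp_atBot.comp ?_
    exact tendsto_id.const_mul_atTop_of_neg (by norm_num)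
  have := h.isBigO.trans_tendsto h2
  refine this.congr' ?_
  filter_upwards [eventually_ge_atTop (0:ℝ)] with x hx
  rw [Real.rpow_one]

lemma tendsto_sq_exp_atBot {b : ℝ} (hb : 0 < b) :
    Tendsto (fun x : ℝ => Real.exp (-b * x ^ 2)) atBot (nhds 0) := by
  have h : Tendsto (fun x : ℝ => Real.exp (-b * x ^ 2)) atTop (nhds 0) := by
    refine Real.tendsto_exp_atBot.comp ?_
    exact (tendsto_pow_atTop two_ne_zero).const_mul_atTop_of_neg (neg_lt_zero.2 hb)
  have := h.comp tendsto_neg_atBot_atTop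
  refine this.congr ?_
  intro x; simp [Function.comp, neg_pow]

lemma tendsto_sq_exp_atTop {b : ℝ} (hb : 0 < b) :
    Tendsto (fun x : ℝ => Real.exp (-b * x ^ 2)) atTop (nhds 0) :=
  Real.tendsto_exp_atBot.comp
    ((tendsto_pow_atTop two_ne_zero).const_mul_atTop_of_neg (neg_lt_zero.2 hb))

lemma integral_mul_exp_neg_mul_sq_real {b : ℝ} (hb : 0 < b) :
    ∫ x : ℝ, x * Real.exp (-b * x ^ 2) = 0 := by
  have hderiv : ∀ x : ℝ, HasDerivAt (fun x : ℝ => -(2*b)⁻¹ * Real.exp (-b * x ^ 2))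
      (x * Real.exp (-b * x ^ 2)) x := by
    intro x
    convert (((hasDerivAt_pow 2 x).const_mul (-b)).exp.const_mul (-(2*b)⁻¹)) using 1
    rfl
    rfl
    field_simp
    ring
  have htop : Tendsto (fun x : ℝ => -(2*b)⁻¹ * Real.exp (-b * x ^ 2)) atTop (nhds 0) := by
    simpa using (tendsto_sq_exp_atTop hb).const_mul (-(2*b)⁻¹)
  have hbot : Tendsto (fun x : ℝ => -(2*b)⁻¹ * Real.exp (-b * x ^ 2)) atBot (nhds 0) := by
    simpa using (tendsto_sq_exp_atBot hb).const_mul (-(2*b)⁻¹)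
  have := integral_of_hasDerivAt_of_tendsto hderiv (integrable_mul_exp_neg_mul_sq hb) hbot htop
  simpa using this

lemma integrable_sq_mul_exp_neg_mul_sq {b : ℝ} (hb : 0 < b) :
    Integrable (fun x : ℝ => x ^ 2 * Real.exp (-b * x ^ 2)) := by
  have := integrable_rpow_mul_exp_neg_mul_sq hb (s := 2) (by norm_num)
  have heq : (fun x : ℝ => x ^ (2:ℝ) * Real.exp (-b * x ^ 2))
      = fun x : ℝ => x ^ 2 * Real.exp (-b * x ^ 2) := by
    ext x
    rw [show ((2:ℝ)) = ((2:ℕ):ℝ) by norm_num, Real.rpow_natCast]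
  rwa [heq] at this

lemma integral_sq_mul_exp_neg_mul_sq {b : ℝ} (hb : 0 < b) :
    ∫ x : ℝ, x ^ 2 * Real.exp (-b * x ^ 2) = Real.sqrt (π / b) / (2 * b) := by
  have hderiv : ∀ x : ℝ, HasDerivAt (fun x : ℝ => -(2*b)⁻¹ * (x * Real.exp (-b * x ^ 2)))
      (x ^ 2 * Real.exp (-b * x ^ 2) - (2*b)⁻¹ * Real.exp (-b * x ^ 2)) x := by
    intro x
    have h1 : HasDerivAt (fun x : ℝ => x * Real.exp (-b * x ^ 2))
        (Real.exp (-b * x ^ 2) + x * ((-b * (2 * x)) * Real.exp (-b * x ^ 2))) x := by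
      have he : HasDerivAt (fun x : ℝ => Real.exp (-b * x ^ 2))
          ((-b * (2 * x)) * Real.exp (-b * x ^ 2)) x := by
        have := ((hasDerivAt_pow 2 x).const_mul (-b)).exp
        convert this using 1
        ring
      simpa using (hasDerivAt_id x).fun_mul he
    convert h1.const_mul (-(2*b)⁻¹) using 1
    rfl
    rfl
    field_simp
    ring
  have hint : Integrable (fun x : ℝ =>
      x ^ 2 * Real.exp (-b * x ^ 2) - (2*b)⁻¹ * Real.exp (-b * x ^ 2)) :=
    (integrable_sq_mul_exp_neg_mul_sq hb).sub ((integrable_exp_neg_mul_sq hb).const_mul _)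
  have htop : Tendsto (fun x : ℝ => -(2*b)⁻¹ * (x * Real.exp (-b * x ^ 2))) atTop (nhds 0) := by
    simpa using (tendsto_mul_exp_neg_mul_sq hb).const_mul (-(2*b)⁻¹)
  have hbot : Tendsto (fun x : ℝ => -(2*b)⁻¹ * (x * Real.exp (-b * x ^ 2))) atBot (nhds 0) := by
    have h2 : Tendsto (fun x : ℝ => x * Real.exp (-b * x ^ 2)) atBot (nhds 0) := by
      have hneg := (tendsto_mul_exp_neg_mul_sq hb).comp tendsto_neg_atBot_atTop
      have heq : (fun x : ℝ => x * Real.exp (-b * x ^ 2))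
          = fun x : ℝ => -(((fun x : ℝ => x * Real.exp (-b * x ^ 2)) ∘ Neg.neg) x) := by
        ext x; simp only [Function.comp_apply]; rw [neg_pow]; ring
      rw [heq]
      simpa using hneg.neg
    simpa using h2.const_mul (-(2*b)⁻¹)
  have key := integral_of_hasDerivAt_of_tendsto hderiv hint hbot htop
  have hsplit : ∫ x : ℝ, (x ^ 2 * Real.exp (-b * x ^ 2) - (2*b)⁻¹ * Real.exp (-b * x ^ 2))
      = (∫ x : ℝ, x ^ 2 * Real.exp (-b * x ^ 2)) - (2*b)⁻¹ * ∫ x : ℝ, Real.exp (-b * x ^ 2) := by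
    rw [integral_sub (integrable_sq_mul_exp_neg_mul_sq hb)
      ((integrable_exp_neg_mul_sq hb).const_mul _), integral_const_mul]
  rw [hsplit, integral_gaussian, sub_zero] at key
  have : (∫ x : ℝ, x ^ 2 * Real.exp (-b * x ^ 2)) = (2*b)⁻¹ * Real.sqrt (π / b) := by
    linarith
  rw [this, inv_mul_eq_div]
lemma integral_gaussianReal_eq {v : NNReal} (hv : v ≠ 0) (g : ℝ → ℝ) :
    ∫ x, g x ∂(gaussianReal 0 v) = ∫ x, gaussianPDFReal 0 v x * g x := by
  rw [gaussianReal_of_var_ne_zero _ hv]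
  have hm : Measurable fun x => (gaussianPDFReal 0 v x).toNNReal :=
    (measurable_gaussianPDFReal 0 v).real_toNNReal
  have : (gaussianPDF 0 v) = fun x => ((gaussianPDFReal 0 v x).toNNReal : ENNReal) := by
    ext x; rw [gaussianPDF_def]; rfl
  rw [this, integral_withDensity_eq_integral_smul hm]
  congr 1; ext x
  simp [NNReal.smul_def, Real.coe_toNNReal _ (gaussianPDFReal_nonneg 0 v x)]

lemma gauss_int_one_dim {β : ℝ} (hβ : 0 < β) (d : ℝ) (v : NNReal) :
    ∫ x, Real.exp (-β * (d + x) ^ 2) ∂(gaussianReal 0 v)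
      = (Real.sqrt (1 + 2 * β * v))⁻¹ * Real.exp (-β * d ^ 2 / (1 + 2 * β * v)) := by
  by_cases hv : v = 0
  · subst hv
    rw [gaussianReal_zero_var, integral_dirac]
    simp
  · have hV : (0:ℝ) < v := lt_of_le_of_ne v.coe_nonneg (by exact_mod_cast (Ne.symm hv))
    set V : ℝ := (v:ℝ) with hVdef
    have hX : (0:ℝ) < 1 + 2 * β * V := by positivity
    set a : ℝ := β + (2 * V)⁻¹ with ha
    have haa : 0 < a := by positivity
    set m : ℝ := β * d / a with hm
    rw [integral_gaussianReal_eq hv]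
    have hpt : ∀ x : ℝ, gaussianPDFReal 0 v x * Real.exp (-β * (d + x) ^ 2)
        = ((Real.sqrt (2 * π * V))⁻¹ * Real.exp (-β * d ^ 2 / (1 + 2 * β * V)))
          * Real.exp (-a * (x + m) ^ 2) := by
      intro x
      have hexp : -(x - 0) ^ 2 / (2 * (v:ℝ)) + -β * (d + x) ^ 2
          = -β * d ^ 2 / (1 + 2 * β * V) + -a * (x + m) ^ 2 := by
        rw [hm, ha]
        have h2V : (2 * V) ≠ 0 := by positivity
        have haa' : (β + (2 * V)⁻¹) ≠ 0 := by positivity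
        field_simp
        ring
      rw [gaussianPDFReal, mul_assoc, ← Real.exp_add, hexp, Real.exp_add, ← mul_assoc]
    rw [integral_congr_ae (ae_of_all _ hpt), integral_const_mul]
    have : ∫ x : ℝ, Real.exp (-a * (x + m) ^ 2) = Real.sqrt (π / a) := by
      rw [integral_add_right_eq_self (fun y => Real.exp (-a * y ^ 2)) m, integral_gaussian]
    rw [this]
    have hmul : a * (2 * V) = 1 + 2 * β * V := by rw [ha]; field_simp; ring
    have harith : (2 * π * V)⁻¹ * (π / a) = (1 + 2 * β * V)⁻¹ := by
      rw [← hmul]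
      have hπ : (π:ℝ) ≠ 0 := pi_ne_zero
      field_simp
    have hkey : (Real.sqrt (2 * π * V))⁻¹ * Real.sqrt (π / a) = (Real.sqrt (1 + 2 * β * V))⁻¹ := by
      rw [← Real.sqrt_inv, ← Real.sqrt_mul (by positivity), harith, Real.sqrt_inv]
    rw [mul_right_comm, hkey]

lemma integrable_gaussianReal_iff {v : NNReal} (hv : v ≠ 0) (g : ℝ → ℝ)
    (hg : AEStronglyMeasurable g volume) :
    Integrable g (gaussianReal 0 v) ↔
      Integrable (fun x => gaussianPDFReal 0 v x * g x) volume := by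
  rw [gaussianReal_of_var_ne_zero _ hv]
  have hm : Measurable fun x => (gaussianPDFReal 0 v x).toNNReal :=
    (measurable_gaussianPDFReal 0 v).real_toNNReal
  have hd : (gaussianPDF 0 v) = fun x => ((gaussianPDFReal 0 v x).toNNReal : ENNReal) := by
    ext x; rw [gaussianPDF_def]; rfl
  rw [hd, integrable_withDensity_iff_integrable_smul hm]
  constructor <;> intro h <;> refine h.congr (ae_of_all _ fun x => ?_) <;>
    simp [NNReal.smul_def, Real.coe_toNNReal _ (gaussianPDFReal_nonneg 0 v x)]

lemma std_pdf_eq (x : ℝ) : gaussianPDFReal 0 1 x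
    = (Real.sqrt (2 * π))⁻¹ * Real.exp (-(1/2) * x ^ 2) := by
  rw [gaussianPDFReal]
  congr 1
  · norm_num
  · congr 1; push_cast; ring

lemma integral_id_stdGauss : ∫ x, x ∂(gaussianReal 0 1) = 0 := by
  rw [integral_gaussianReal_eq one_ne_zero]
  have : ∀ x : ℝ, gaussianPDFReal 0 1 x * x
      = (Real.sqrt (2 * π))⁻¹ * (x * Real.exp (-(1/2) * x ^ 2)) := by
    intro x; rw [std_pdf_eq]; ring
  rw [integral_congr_ae (ae_of_all _ this), integral_const_mul,
    integral_mul_exp_neg_mul_sq_real (by norm_num : (0:ℝ) < 1/2), mul_zero]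

lemma integral_sq_stdGauss : ∫ x, x ^ 2 ∂(gaussianReal 0 1) = 1 := by
  rw [integral_gaussianReal_eq one_ne_zero]
  have : ∀ x : ℝ, gaussianPDFReal 0 1 x * x ^ 2
      = (Real.sqrt (2 * π))⁻¹ * (x ^ 2 * Real.exp (-(1/2) * x ^ 2)) := by
    intro x; rw [std_pdf_eq]; ring
  rw [integral_congr_ae (ae_of_all _ this), integral_const_mul,
    integral_sq_mul_exp_neg_mul_sq (by norm_num : (0:ℝ) < 1/2)]
  rw [show π / (1/2 : ℝ) = 2 * π by ring, show (2 * (1/2 : ℝ)) = 1 by norm_num, div_one]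
  rw [inv_mul_eq_div, div_eq_one_iff_eq (by positivity)]

lemma integrable_id_stdGauss : Integrable (fun x : ℝ => x) (gaussianReal 0 1) := by
  rw [integrable_gaussianReal_iff one_ne_zero (fun x : ℝ => x) measurable_id.aestronglyMeasurable]
  have : ∀ x : ℝ, gaussianPDFReal 0 1 x * x
      = (Real.sqrt (2 * π))⁻¹ * (x * Real.exp (-(1/2) * x ^ 2)) := by
    intro x; rw [std_pdf_eq]; ring
  refine Integrable.congr ?_ (ae_of_all _ fun x => (this x).symm)
  exact (integrable_mul_exp_neg_mul_sq (by norm_num)).const_mul _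

lemma integrable_sq_stdGauss : Integrable (fun x : ℝ => x ^ 2) (gaussianReal 0 1) := by
  rw [integrable_gaussianReal_iff one_ne_zero (fun x : ℝ => x ^ 2)
    (measurable_id.pow_const 2).aestronglyMeasurable]
  have : ∀ x : ℝ, gaussianPDFReal 0 1 x * x ^ 2
      = (Real.sqrt (2 * π))⁻¹ * (x ^ 2 * Real.exp (-(1/2) * x ^ 2)) := by
    intro x; rw [std_pdf_eq]; ring
  refine Integrable.congr ?_ (ae_of_all _ fun x => (this x).symm)
  exact (integrable_sq_mul_exp_neg_mul_sq (by norm_num)).const_mul _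

lemma inner_int (a b : ℝ) :
    ∫ z : Fin 2 → ℝ, (a * z 0 + b * z 1) ^ 2 ∂(stdGaussian (Fin 2)) = a ^ 2 + b ^ 2 := by
  have hmp := (measurePreserving_finTwoArrow (gaussianReal 0 1)).symm
  rw [_root_.stdGaussian, ← hmp.integral_comp' (f := MeasurableEquiv.finTwoArrow.symm)]
  have hsymm : ∀ p : ℝ × ℝ, (MeasurableEquiv.finTwoArrow.symm p : Fin 2 → ℝ) = ![p.1, p.2] := by
    intro p; rfl
  have hpt : ∀ p : ℝ × ℝ,
      (a * (MeasurableEquiv.finTwoArrow.symm p : Fin 2 → ℝ) 0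
        + b * (MeasurableEquiv.finTwoArrow.symm p : Fin 2 → ℝ) 1) ^ 2
      = (fun x => a ^ 2 * x ^ 2) p.1 * (fun _ => (1:ℝ)) p.2
        + (fun x => 2 * a * b * x) p.1 * (fun y => y) p.2
        + (fun _ => (1:ℝ)) p.1 * (fun y => b ^ 2 * y ^ 2) p.2 := by
    intro p
    rw [hsymm]
    simp only [Matrix.cons_val_zero, Matrix.cons_val_one, Matrix.head_cons]
    ring
  rw [integral_congr_ae (ae_of_all _ hpt)]
  have i1 : Integrable (fun p : ℝ × ℝ => (fun x => a ^ 2 * x ^ 2) p.1 * (fun _ => (1:ℝ)) p.2)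
      ((gaussianReal 0 1).prod (gaussianReal 0 1)) :=
    (integrable_sq_stdGauss.const_mul _).mul_prod (integrable_const 1)
  have i2 : Integrable (fun p : ℝ × ℝ => (fun x => 2 * a * b * x) p.1 * (fun y => y) p.2)
      ((gaussianReal 0 1).prod (gaussianReal 0 1)) :=
    (integrable_id_stdGauss.const_mul _).mul_prod integrable_id_stdGauss
  have i3 : Integrable (fun p : ℝ × ℝ => (fun _ => (1:ℝ)) p.1 * (fun y => b ^ 2 * y ^ 2) p.2)
      ((gaussianReal 0 1).prod (gaussianReal 0 1)) :=
    (integrable_const 1).mul_prod (integrable_sq_stdGauss.const_mul _)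
  calc ∫ p : ℝ × ℝ, ((fun x => a ^ 2 * x ^ 2) p.1 * (fun _ => (1:ℝ)) p.2
        + (fun x => 2 * a * b * x) p.1 * (fun y => y) p.2
        + (fun _ => (1:ℝ)) p.1 * (fun y => b ^ 2 * y ^ 2) p.2)
        ∂((gaussianReal 0 1).prod (gaussianReal 0 1))
      = ((∫ p : ℝ × ℝ, (fun x => a ^ 2 * x ^ 2) p.1 * (fun _ => (1:ℝ)) p.2
          ∂((gaussianReal 0 1).prod (gaussianReal 0 1)))
        + ∫ p : ℝ × ℝ, (fun x => 2 * a * b * x) p.1 * (fun y => y) p.2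
          ∂((gaussianReal 0 1).prod (gaussianReal 0 1)))
        + ∫ p : ℝ × ℝ, (fun _ => (1:ℝ)) p.1 * (fun y => b ^ 2 * y ^ 2) p.2
          ∂((gaussianReal 0 1).prod (gaussianReal 0 1)) := by
        exact (integral_add (i1.add i2) i3).trans
          (congrArg (· + _) (integral_add i1 i2))
    _ = a ^ 2 + b ^ 2 := by
        rw [integral_prod_mul (μ := gaussianReal 0 1) (ν := gaussianReal 0 1)
            (fun x => a ^ 2 * x ^ 2) (fun _ => (1:ℝ)),
          integral_prod_mul (μ := gaussianReal 0 1) (ν := gaussianReal 0 1)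
            (fun x => 2 * a * b * x) (fun y => y),
          integral_prod_mul (μ := gaussianReal 0 1) (ν := gaussianReal 0 1)
            (fun _ => (1:ℝ)) (fun y => b ^ 2 * y ^ 2)]
        rw [integral_const_mul, integral_const_mul, integral_const_mul, integral_id_stdGauss,
          integral_sq_stdGauss]
        simp

lemma pi_integral_prod {n : ℕ} (m : Measure ℝ) [hsf : SigmaFinite m] (f : Fin n → ℝ → ℝ) :
    ∫ x : Fin n → ℝ, ∏ i, f i (x i) ∂(Measure.pi fun _ => m) = ∏ i, ∫ x, f i x ∂m := by
  letI : MeasureSpace ℝ := ⟨m⟩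
  haveI : SigmaFinite (volume : Measure ℝ) := hsf
  exact MeasureTheory.integral_fintype_prod_eq_prod f

lemma gamma_formula {p : ℕ} {β : ℝ} (hβ : 0 < β) (σ2 : NNReal) (s sstar : Fin p → ℝ)
    (ρ : (Fin p → ℝ) → ℝ)
    (hρ : ∀ u, ρ u = Real.exp (-β * ∑ i, (s i + u i - sstar i) ^ 2)) :
    ∫ u, ρ u ∂(Measure.pi fun _ : Fin p => gaussianReal 0 σ2)
      = ((Real.sqrt (1 + 2 * β * σ2))⁻¹) ^ p
        * Real.exp (-β * (∑ i, (s i - sstar i) ^ 2) / (1 + 2 * β * σ2)) := by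
  have hρprod : ∀ u : Fin p → ℝ,
      ρ u = ∏ i, (fun x => Real.exp (-β * ((s i - sstar i) + x) ^ 2)) (u i) := by
    intro u
    rw [hρ u, Finset.mul_sum, Real.exp_sum]
    exact Finset.prod_congr rfl fun i _ => congrArg Real.exp (by ring)
  rw [integral_congr_ae (ae_of_all _ hρprod), pi_integral_prod (gaussianReal 0 σ2) (fun i x => Real.exp (-β * ((s i - sstar i) + x) ^ 2))]
  have : ∀ i : Fin p, (∫ x, Real.exp (-β * ((s i - sstar i) + x) ^ 2) ∂(gaussianReal 0 σ2))
      = (Real.sqrt (1 + 2 * β * σ2))⁻¹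
        * Real.exp (-β * (s i - sstar i) ^ 2 / (1 + 2 * β * σ2)) :=
    fun i => gauss_int_one_dim hβ _ _
  rw [Finset.prod_congr rfl fun i _ => this i, Finset.prod_mul_distrib, Finset.prod_const,
    ← Real.exp_sum, Finset.card_univ, Fintype.card_fin]
  congr 1
  rw [← Finset.sum_div, ← Finset.mul_sum]

/-- **Closed-form KALE mean squared error with one observation.** Let `u ~ N(0, σ²I_p)`, and
conditionally on `u` let `(y, x*)` be a centered bivariate Gaussian vector with unit
variances and covariance `ρ u = exp(-β‖s+u-s*‖²)` (realized via any matrix square root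
`A u` of the conditional covariance matrix applied to a standard bivariate Gaussian).
With `γ = E[ρ u]`, the predictor `γ·y` satisfies
`E[(γ·y - x*)²] = 1 - (1+2βσ²)^(-p) exp(-2βΔ²/(1+2βσ²))`, where `Δ² = ‖s-s*‖²`. -/
theorem kale_mse_closed_form
    (p : ℕ) (hp : 1 ≤ p) (β : ℝ) (hβ : 0 < β) (σ2 : NNReal)
    (s sstar : Fin p → ℝ) (Δ2 : ℝ) (hΔ2 : Δ2 = ∑ i, (s i - sstar i) ^ 2)
    (μ : Measure (Fin p → ℝ)) (hμ : μ = Measure.pi fun _ => gaussianReal 0 σ2)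
    (ρ : (Fin p → ℝ) → ℝ)
    (hρ : ∀ u, ρ u = Real.exp (-β * ∑ i, (s i + u i - sstar i) ^ 2))
    (γ : ℝ) (hγ : γ = ∫ u, ρ u ∂μ)
    (A : (Fin p → ℝ) → Matrix (Fin 2) (Fin 2) ℝ)
    (hA : ∀ u, A u * (A u)ᵀ = !![1, ρ u; ρ u, 1]) :
    ∫ u, (∫ z : Fin 2 → ℝ,
        (γ * (A u).mulVec z 0 - (A u).mulVec z 1) ^ 2 ∂(stdGaussian (Fin 2))) ∂μ
      = 1 - (1 + 2 * β * (σ2 : ℝ)) ^ (-(p : ℝ))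
          * Real.exp (-2 * β * Δ2 / (1 + 2 * β * (σ2 : ℝ))) := by
  subst hμ hΔ2
  haveI : IsProbabilityMeasure (Measure.pi fun _ : Fin p => gaussianReal 0 σ2) := by
    infer_instance
  have hX : (0:ℝ) < 1 + 2 * β * (σ2:ℝ) := by positivity
  -- the inner integral
  have hinner : ∀ u : Fin p → ℝ,
      (∫ z : Fin 2 → ℝ, (γ * (A u).mulVec z 0 - (A u).mulVec z 1) ^ 2 ∂(stdGaussian (Fin 2)))
        = (γ ^ 2 + 1) + (-(2 * γ)) * ρ u := by
    intro u
    have hz : ∀ z : Fin 2 → ℝ, (γ * (A u).mulVec z 0 - (A u).mulVec z 1) ^ 2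
        = ((γ * A u 0 0 - A u 1 0) * z 0 + (γ * A u 0 1 - A u 1 1) * z 1) ^ 2 := by
      intro z
      have h0 : (A u).mulVec z 0 = A u 0 0 * z 0 + A u 0 1 * z 1 := by
        simp [Matrix.mulVec, dotProduct, Fin.sum_univ_two]
      have h1 : (A u).mulVec z 1 = A u 1 0 * z 0 + A u 1 1 * z 1 := by
        simp [Matrix.mulVec, dotProduct, Fin.sum_univ_two]
      rw [h0, h1]; ring
    rw [integral_congr_ae (ae_of_all _ hz), inner_int]
    have h00 := congrFun (congrFun (hA u) 0) 0
    have h01 := congrFun (congrFun (hA u) 0) 1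
    have h11 := congrFun (congrFun (hA u) 1) 1
    simp only [Matrix.mul_apply, Matrix.transpose_apply, Fin.sum_univ_two,
      Matrix.cons_val', Matrix.cons_val_zero, Matrix.cons_val_one, Matrix.head_cons,
      Matrix.empty_val', Matrix.cons_val_fin_one, Matrix.head_fin_const,
      Matrix.of_apply] at h00 h01 h11
    linear_combination (γ ^ 2) * h00 - (2 * γ) * h01 + h11
  -- integrability of ρ
  have hcont : Continuous ρ := by
    have : ρ = fun u => Real.exp (-β * ∑ i, (s i + u i - sstar i) ^ 2) := funext hρ
    rw [this]
    exact Real.continuous_exp.comp (continuous_const.mul (continuous_finset_sum _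
      fun i _ => ((continuous_const.add (continuous_apply i)).sub continuous_const).pow 2))
  have hρint : Integrable ρ (Measure.pi fun _ : Fin p => gaussianReal 0 σ2) := by
    refine Integrable.mono' (integrable_const 1) hcont.aestronglyMeasurable
      (ae_of_all _ fun u => ?_)
    rw [hρ u, Real.norm_eq_abs, abs_of_pos (Real.exp_pos _)]
    refine Real.exp_le_one_iff.mpr ?_
    have hs : (0:ℝ) ≤ ∑ i, (s i + u i - sstar i) ^ 2 :=
      Finset.sum_nonneg fun i _ => sq_nonneg _
    nlinarith
  -- compute the outer integral
  rw [integral_congr_ae (ae_of_all _ hinner),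
    integral_add (integrable_const _) (hρint.const_mul _), integral_const_mul, ← hγ,
    integral_const, probReal_univ]
  -- the value of γ
  have hγval : γ = ((Real.sqrt (1 + 2 * β * (σ2:ℝ)))⁻¹) ^ p
      * Real.exp (-β * (∑ i, (s i - sstar i) ^ 2) / (1 + 2 * β * (σ2:ℝ))) :=
    hγ.trans (gamma_formula hβ σ2 s sstar ρ hρ)
  have hγsq : γ ^ 2 = (1 + 2 * β * (σ2:ℝ)) ^ (-(p : ℝ))
      * Real.exp (-2 * β * (∑ i, (s i - sstar i) ^ 2) / (1 + 2 * β * (σ2:ℝ))) := by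
    rw [hγval, mul_pow]
    congr 1
    · rw [← pow_mul, Real.rpow_neg hX.le, Real.rpow_natCast,
        show p * 2 = 2 * p from mul_comm _ _, pow_mul, inv_pow, Real.sq_sqrt hX.le, inv_pow]
    · rw [pow_two, ← Real.exp_add]
      congr 1
      ring
  rw [smul_eq_mul]
  rw [show (1:ℝ) * (γ ^ 2 + 1) + -(2 * γ) * γ = 1 - γ ^ 2 from by
    simp; ring]
  rw [hγsq]
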